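/- A nonnegative real-analytic function f : ℝ → ℝ admits, locally around each point, a real-analytic square root: for each t₀ there is a neighborhood U and real-analytic g : U → ℝ with g² = f on U. -/

import Mathlib

open Filter Set Topology

/-- `Real.sqrt` is real-analytic at positive points. -/
lemma stmt18_analyticAt_sqrt {x : ℝ} (hx : 0 < x) : AnalyticAt ℝ Real.sqrt x := by
  have h1 : AnalyticAt ℂ (fun z : ℂ => z ^ ((1/2 : ℝ) : ℂ)) (x : ℂ) :=
    analyticAt_id.cpow analyticAt_const (by simp [Complex.mem_slitPlane_iff, hx])
  have h2 : AnalyticAt ℝ (fun z : ℂ => z ^ ((1/2 : ℝ) : ℂ)) (x : ℂ) := h1.restrictScalars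
  have h3 : AnalyticAt ℝ (fun t : ℝ => ((t : ℂ) ^ ((1/2 : ℝ) : ℂ))) x :=
    h2.comp (Complex.ofRealCLM.analyticAt x)
  have h4 : AnalyticAt ℝ (fun t : ℝ => ((t : ℂ) ^ ((1/2 : ℝ) : ℂ)).re) x :=
    (Complex.reCLM.analyticAt _).comp h3
  apply h4.congr
  filter_upwards [Ioi_mem_nhds hx] with t ht
  have : ((t ^ ((1:ℝ)/2) : ℝ) : ℂ) = (t : ℂ) ^ (((1:ℝ)/2 : ℝ) : ℂ) :=
    Complex.ofReal_cpow (le_of_lt ht) _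
  rw [← this, Complex.ofReal_re, Real.sqrt_eq_rpow]

/-- A nonnegative real-analytic function on `ℝ` admits, locally around each point, a
real-analytic square root. -/
theorem stmt18 (f : ℝ → ℝ) (hf : AnalyticOnNhd ℝ f Set.univ) (hpos : ∀ t, 0 ≤ f t) :
    ∀ t₀ : ℝ, ∃ U ∈ nhds t₀, ∃ g : ℝ → ℝ,
      AnalyticOnNhd ℝ g U ∧ ∀ t ∈ U, g t ^ 2 = f t := by
  intro t₀
  have hft : AnalyticAt ℝ f t₀ := hf t₀ (Set.mem_univ _)
  rcases eq_or_ne (analyticOrderAt f t₀) ⊤ with h | h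
  · -- f vanishes identically near t₀
    rw [analyticOrderAt_eq_top] at h
    obtain ⟨U, hUmem, hU⟩ := eventually_iff_exists_mem.mp h
    exact ⟨U, hUmem, 0, fun z _ => analyticAt_const, fun t ht => by
      simp [hU t ht]⟩
  · set n : ℕ := (analyticOrderAt f t₀).toNat with hn
    have hord : analyticOrderAt f t₀ = (n : ℕ∞) := (ENat.coe_toNat h).symm
    obtain ⟨g, hg_an, hg_ne, heq⟩ := (hft.analyticOrderAt_eq_natCast (n := n)).mp hord
    simp only [smul_eq_mul] at heq
    -- g t₀ > 0
    have hgpos : 0 < g t₀ := by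
      rcases lt_or_gt_of_ne hg_ne with hlt | hgt
      · exfalso
        have hev : ∀ᶠ z in 𝓝[>] t₀,
            f z = (z - t₀) ^ n * g z ∧ g z < 0 := by
          apply Filter.Eventually.filter_mono nhdsWithin_le_nhds
          exact heq.and (hg_an.continuousAt.eventually (eventually_lt_nhds hlt))
        obtain ⟨z, hz⟩ := (hev.and self_mem_nhdsWithin).exists
        obtain ⟨⟨hfz, hgz⟩, hzgt⟩ := hz
        have : f z < 0 := by
          rw [hfz]
          exact mul_neg_of_pos_of_neg (pow_pos (sub_pos.mpr hzgt) n) hgz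
        exact absurd (hpos z) (not_le.mpr this)
      · exact hgt
    -- n is even
    have hneven : Even n := by
      rcases Nat.even_or_odd n with he | ho
      · exact he
      · exfalso
        have hev : ∀ᶠ z in 𝓝[<] t₀,
            f z = (z - t₀) ^ n * g z ∧ 0 < g z := by
          apply Filter.Eventually.filter_mono nhdsWithin_le_nhds
          exact heq.and (hg_an.continuousAt.eventually (eventually_gt_nhds hgpos))
        obtain ⟨z, hz⟩ := (hev.and self_mem_nhdsWithin).exists
        obtain ⟨⟨hfz, hgz⟩, hzlt⟩ := hz
        have : f z < 0 := by
          rw [hfz]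
          exact mul_neg_of_neg_of_pos (Odd.pow_neg ho (sub_neg.mpr hzlt)) hgz
        exact absurd (hpos z) (not_le.mpr this)
    obtain ⟨k, hk⟩ := hneven
    have hev : ∀ᶠ z in 𝓝 t₀,
        (f z = (z - t₀) ^ n * g z ∧ 0 < g z) ∧ AnalyticAt ℝ g z :=
      (heq.and (hg_an.continuousAt.eventually (eventually_gt_nhds hgpos))).and
        hg_an.eventually_analyticAt
    obtain ⟨U, hUmem, hU⟩ := eventually_iff_exists_mem.mp hev
    refine ⟨U, hUmem, fun t => (t - t₀) ^ k * Real.sqrt (g t), ?_, ?_⟩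
    · intro z hz
      exact ((analyticAt_id.sub analyticAt_const).pow k).mul
        ((stmt18_analyticAt_sqrt (hU z hz).1.2).comp (hU z hz).2)
    · intro t ht
      obtain ⟨⟨hft', hgt⟩, -⟩ := hU t ht
      have hsq : Real.sqrt (g t) ^ 2 = g t := Real.sq_sqrt hgt.le
      rw [mul_pow, hsq, hft', hk]
      ring
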